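/- Define A_k(t) by A_1(t)=1 and A_k(t)=1-t/A_{k-1}(t). Fix n>1 and let δ_1 = sin²(π/(2n+1))/sin²(2π/(2n+1)). Then δ_1 = A_n(δ_1)², and consequently x_n(δ_1) = 1 where x_n(t) = t/A_n(t)². -/
import Mathlib


open Real

/-- The continued-fraction recursion `A_1(t) = 1`, `A_k(t) = 1 - t/A_{k-1}(t)`. -/
noncomputable def contA : ℕ → ℝ → ℝ
  | 0, _ => 1
  | 1, _ => 1
  | (k + 2), t => 1 - t / contA (k + 1) t

theorem delta_one_fixed_point (n : ℕ) (hn : 1 < n) :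
    Real.sin (π / (2 * n + 1)) ^ 2 / Real.sin (2 * π / (2 * n + 1)) ^ 2
        = (contA n (Real.sin (π / (2 * n + 1)) ^ 2 / Real.sin (2 * π / (2 * n + 1)) ^ 2)) ^ 2 ∧
      (Real.sin (π / (2 * n + 1)) ^ 2 / Real.sin (2 * π / (2 * n + 1)) ^ 2) /
          (contA n (Real.sin (π / (2 * n + 1)) ^ 2 / Real.sin (2 * π / (2 * n + 1)) ^ 2)) ^ 2
        = 1 := by
  have hden : (0:ℝ) < 2 * n + 1 := by positivity
  set θ : ℝ := π / (2 * n + 1) with hθdef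
  have hθpos : 0 < θ := div_pos pi_pos hden
  have hθlt : θ < π / 2 := by
    rw [hθdef, div_lt_div_iff₀ hden two_pos]
    have : (1:ℝ) < n := by exact_mod_cast hn
    nlinarith [pi_pos]
  have hcos : 0 < Real.cos θ := Real.cos_pos_of_mem_Ioo ⟨by linarith [pi_pos], hθlt⟩
  have hsin : ∀ k : ℕ, 1 ≤ k → k ≤ n → 0 < Real.sin (k * θ) := by
    intro k hk1 hkn
    apply Real.sin_pos_of_pos_of_lt_pi
    · have : (1:ℝ) ≤ k := by exact_mod_cast hk1
      nlinarith
    · have hk : (k:ℝ) ≤ n := by exact_mod_cast hkn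
      have : (k:ℝ) * θ ≤ n * θ := by nlinarith
      have hnθ : (n:ℝ) * θ < π := by
        have h1 : (n:ℝ) * θ * (2 * n + 1) = n * π := by
          rw [hθdef]; field_simp
        nlinarith [pi_pos, hden]
      linarith
  have h2θ : 2 * π / (2 * ↑n + 1) = 2 * θ := by rw [hθdef]; ring
  have hsθ : 0 < Real.sin θ := by
    have := hsin 1 le_rfl (by omega); simpa using this
  set δ : ℝ := Real.sin (π / (2 * n + 1)) ^ 2 / Real.sin (2 * π / (2 * n + 1)) ^ 2 with hδdef
  have hδ : δ = 1 / (4 * Real.cos θ ^ 2) := by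
    rw [hδdef, h2θ, ← hθdef, Real.sin_two_mul]
    field_simp
    ring
  -- key induction
  have key : ∀ k : ℕ, k + 1 ≤ n →
      contA (k + 1) δ = Real.sin ((k + 2) * θ) / (2 * Real.cos θ * Real.sin ((k + 1) * θ)) := by
    intro k
    induction k with
    | zero =>
      intro _
      simp only [contA]
      norm_num
      rw [Real.sin_two_mul]
      rw [eq_div_iff (by positivity)]
      ring
    | succ m ih =>
      intro hle
      have ih' := ih (by omega)
      have hs1 : 0 < Real.sin ((m + 1 : ℕ) * θ) := hsin (m + 1) (by omega) (by omega)
      have hs2 : 0 < Real.sin ((m + 2 : ℕ) * θ) := hsin (m + 2) (by omega) (by omega)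
      have hs3 : Real.sin ((m + 3 : ℕ) * θ) =
          2 * Real.cos θ * Real.sin ((m + 2 : ℕ) * θ) - Real.sin ((m + 1 : ℕ) * θ) := by
        have e1 : ((m + 3 : ℕ) : ℝ) * θ = ((m + 2 : ℕ) : ℝ) * θ + θ := by push_cast; ring
        have e2 : ((m + 1 : ℕ) : ℝ) * θ = ((m + 2 : ℕ) : ℝ) * θ - θ := by push_cast; ring
        rw [e1, e2, Real.sin_add, Real.sin_sub]
        ring
      rw [show m + 1 + 1 = m + 2 from rfl]
      simp only [contA]
      rw [ih', hδ]
      have hc : Real.cos θ ≠ 0 := ne_of_gt hcos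
      push_cast at hs1 hs2 hs3 ⊢
      have hs1' : Real.sin (((m:ℝ) + 1) * θ) ≠ 0 := ne_of_gt hs1
      have hs2' : Real.sin (((m:ℝ) + 2) * θ) ≠ 0 := ne_of_gt hs2
      rw [show ((m:ℝ) + 1 + 2) * θ = ((m:ℝ) + 3) * θ by ring,
          show ((m:ℝ) + 1 + 1) * θ = ((m:ℝ) + 2) * θ by ring, hs3]
      field_simp
      ring
  -- apply at k = n - 1
  obtain ⟨m, rfl⟩ : ∃ m, n = m + 1 := ⟨n - 1, by omega⟩
  have hA := key m le_rfl
  have hsymm : Real.sin ((m + 2 : ℕ) * θ) = Real.sin ((m + 1 : ℕ) * θ) := by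
    have : ((m + 2 : ℕ) : ℝ) * θ = π - ((m + 1 : ℕ) : ℝ) * θ := by
      rw [hθdef]
      field_simp
      push_cast
      ring
    rw [this, Real.sin_pi_sub]
  have hs1 : 0 < Real.sin ((m + 1 : ℕ) * θ) := hsin (m + 1) (by omega) le_rfl
  have hAval : contA (m + 1) δ = 1 / (2 * Real.cos θ) := by
    push_cast at hsymm hs1
    rw [hA, hsymm]
    rw [div_eq_div_iff (by positivity) (by positivity)]
    ring
  have hfix : δ = (contA (m + 1) δ) ^ 2 := by
    rw [hAval, hδ]
    field_simp
    ring
  refine ⟨hfix, ?_⟩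
  rw [← hfix, hδ]
  have : (4 : ℝ) * Real.cos θ ^ 2 ≠ 0 := by positivity
  field_simp
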